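/- Let L be a finite lattice admitting an SB-labeling. Then for every pair of elements x ≤ y in L, the Möbius function satisfies μ(x, y) ∈ {-1, 0, 1}. -/

import Mathlib

variable {α : Type*}

/-- A saturated chain from `x` to `y`: a list starting at `x`, ending at `y`, each
consecutive pair a covering pair. -/
def IsSatChain [PartialOrder α] (c : List α) (x y : α) : Prop :=
  c.head? = some x ∧ c.getLast? = some y ∧ List.Chain' (· ⋖ ·) c

/-- The list of labels used by a chain `c` under the edge-labeling `lam`. -/
def chainLabels {Λ : Type*} (lam : α → α → Λ) (c : List α) : List Λ :=
  (c.zip c.tail).map fun p => lam p.1 p.2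

/-- An SB-labeling of a lattice: an edge-labeling `lam` of covering pairs such that for all
`p ⋖ p₁, p₂` with `p₁ ≠ p₂`: the two labels differ, every saturated chain from `p` to
`p₁ ⊔ p₂` uses both labels, and uses no other label. -/
def IsSBLabeling [Lattice α] {Λ : Type*} (lam : α → α → Λ) : Prop :=
  ∀ p p₁ p₂ : α, p ⋖ p₁ → p ⋖ p₂ → p₁ ≠ p₂ →
    lam p p₁ ≠ lam p p₂ ∧
    ∀ c : List α, IsSatChain c p (p₁ ⊔ p₂) →
      lam p p₁ ∈ chainLabels lam c ∧ lam p p₂ ∈ chainLabels lam c ∧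
      ∀ l ∈ chainLabels lam c, l = lam p p₁ ∨ l = lam p p₂

set_option linter.unusedSectionVars false

namespace SBProof

open Finset

variable {Λ : Type*}

/-- Saturated paths from `x` to `z`, carrying the list of labels. -/
inductive SatPath [PartialOrder α] (lam : α → α → Λ) : α → α → List Λ → Prop
  | refl (x : α) : SatPath lam x x []
  | cons {x y z : α} {L : List Λ} (h : x ⋖ y) (hp : SatPath lam y z L) :
      SatPath lam x z (lam x y :: L)

section Basic

variable [PartialOrder α] {lam : α → α → Λ}

theorem SatPath.le {x z : α} {L : List Λ} (h : SatPath lam x z L) : x ≤ z := by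
  induction h with
  | refl => exact le_rfl
  | cons h _ ih => exact h.le.trans ih

theorem SatPath.append {x y z : α} {A B : List Λ} (h1 : SatPath lam x y A)
    (h2 : SatPath lam y z B) : SatPath lam x z (A ++ B) := by
  induction h1 with
  | refl => simpa using h2
  | cons h _ ih => exact SatPath.cons h (ih h2)

theorem chainLabels_cons_cons (x y : α) (r : List α) :
    chainLabels lam (x :: y :: r) = lam x y :: chainLabels lam (y :: r) := rfl

theorem SatPath.exists_chain_cons {x z : α} {L : List Λ} (h : SatPath lam x z L) :
    ∃ r : List α, IsSatChain (x :: r) x z ∧ chainLabels lam (x :: r) = L := by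
  induction h with
  | refl x =>
    exact ⟨[], ⟨rfl, rfl, List.isChain_singleton x⟩, rfl⟩
  | @cons a b c M h hp ih =>
    obtain ⟨r, ⟨hh, hl, hc⟩, hlab⟩ := ih
    refine ⟨b :: r, ⟨rfl, ?_, ?_⟩, ?_⟩
    · rw [List.getLast?_cons_cons]; exact hl
    · exact List.isChain_cons_cons.2 ⟨h, hc⟩
    · rw [chainLabels_cons_cons, hlab]

theorem SatPath.exists_chain {x z : α} {L : List Λ} (h : SatPath lam x z L) :
    ∃ c, IsSatChain c x z ∧ chainLabels lam c = L := by
  obtain ⟨r, h1, h2⟩ := h.exists_chain_cons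
  exact ⟨x :: r, h1, h2⟩

end Basic

section Lattice

variable [Lattice α] [Fintype α] [DecidableEq α] [LocallyFiniteOrder α] {lam : α → α → Λ}

theorem sb_path (hSB : IsSBLabeling lam) {p p₁ p₂ : α} {L : List Λ} (h1 : p ⋖ p₁) (h2 : p ⋖ p₂)
    (hne : p₁ ≠ p₂) (hp : SatPath lam p (p₁ ⊔ p₂) L) :
    lam p p₁ ∈ L ∧ lam p p₂ ∈ L ∧ ∀ l ∈ L, l = lam p p₁ ∨ l = lam p p₂ := by
  obtain ⟨c, hc, rfl⟩ := hp.exists_chain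
  exact (hSB p p₁ p₂ h1 h2 hne).2 c hc

theorem exists_satPath (lam : α → α → Λ) (x z : α) (h : x ≤ z) : ∃ L, SatPath lam x z L := by
  rcases eq_or_lt_of_le h with rfl | hlt
  · exact ⟨[], SatPath.refl x⟩
  · obtain ⟨q, hq, hqz⟩ := exists_covBy_le_of_lt hlt
    have hcard : (Icc q z).card < (Icc x z).card :=
      card_lt_card (Icc_ssubset_Icc_left h hq.lt le_rfl)
    obtain ⟨L, hL⟩ := exists_satPath lam q z hqz
    exact ⟨_, SatPath.cons hq hL⟩
termination_by (Icc x z).card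

/-- Walking step used in the rerouting lemma `Tlem`. -/
theorem Twalk {p z : α} {la lb : Λ} {L : List Λ}
    (hla : la ∈ L)
    (hT : ∀ p' z' y' (L' : List Λ), (Icc p' z').card < (Icc p z).card →
       SatPath lam p' z' L' → p' ⋖ y' → y' ≤ z' →
       ∃ M, SatPath lam y' z' M ∧ ∀ l ∈ M, l ∈ L' ∨ l = lam p' y') :
    ∀ {s m : α} {D : List Λ}, SatPath lam s m D → m ≤ z →
      (∀ l ∈ D, l = la ∨ l = lb) → p < s →
      ∀ K : List Λ, SatPath lam s z K → (∀ l ∈ K, l ∈ L ∨ l = lb) →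
      ∃ M, SatPath lam m z M ∧ ∀ l ∈ M, l ∈ L ∨ l = lb := by
  intro s m D hD
  induction hD with
  | refl s => exact fun _ _ _ K hK hKΩ => ⟨K, hK, hKΩ⟩
  | @cons x y m D' hxy hp ih =>
    intro hmz hDlab hps K hK hKΩ
    have hyz : y ≤ z := (hp.le).trans hmz
    have hcard : (Icc x z).card < (Icc p z).card := by
      refine card_lt_card (Icc_ssubset_Icc_left ?_ hps le_rfl)
      exact (hps.trans_le hK.le).le
    obtain ⟨M₁, hM₁, hM₁Ω⟩ := hT x z y K hcard hK hxy hyz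
    have hlab : lam x y = la ∨ lam x y = lb := hDlab _ (List.mem_cons_self)
    refine ih hmz (fun l hl => hDlab l (List.mem_cons_of_mem _ hl)) (hps.trans hxy.lt) M₁ hM₁ ?_
    intro l hl
    rcases hM₁Ω l hl with h | h
    · exact hKΩ l h
    · rcases hlab with h2 | h2
      · exact Or.inl (by rw [h, h2]; exact hla)
      · exact Or.inr (by rw [h, h2])

/-- Rerouting lemma: a saturated path from `p` to `z` can be rerouted to start with a
prescribed cover `y₁ ≤ z`, using only old labels plus `lam p y₁`. -/
theorem Tlem (hSB : IsSBLabeling lam) (p z y₁ : α) (L : List Λ)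
    (hL : SatPath lam p z L) (hy₁ : p ⋖ y₁) (hy₁z : y₁ ≤ z) :
    ∃ M, SatPath lam y₁ z M ∧ ∀ l ∈ M, l ∈ L ∨ l = lam p y₁ := by
  cases hL with
  | refl => exact absurd hy₁z hy₁.lt.not_ge
  | @cons _ c₁ _ L' hc₁ hL' =>
    by_cases hce : c₁ = y₁
    · subst hce
      exact ⟨L', hL', fun l hl => Or.inl (List.mem_cons_of_mem _ hl)⟩
    · have hmz : c₁ ⊔ y₁ ≤ z := sup_le hL'.le hy₁z
      obtain ⟨D₁, hD₁⟩ := exists_satPath lam c₁ (c₁ ⊔ y₁) le_sup_left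
      have hD₁lab := (sb_path hSB hc₁ hy₁ hce (SatPath.cons hc₁ hD₁)).2.2
      obtain ⟨D₂, hD₂⟩ := exists_satPath lam y₁ (c₁ ⊔ y₁) le_sup_right
      have hD₂lab := (sb_path hSB hc₁ hy₁ hce (SatPath.cons hy₁ hD₂)).2.2
      have hT : ∀ p' z' y' (L'' : List Λ), (Icc p' z').card < (Icc p z).card →
          SatPath lam p' z' L'' → p' ⋖ y' → y' ≤ z' →
          ∃ M, SatPath lam y' z' M ∧ ∀ l ∈ M, l ∈ L'' ∨ l = lam p' y' :=
        fun p' z' y' L'' hcard hL'' hc hle => Tlem hSB p' z' y' L'' hL'' hc hle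
      obtain ⟨M₂, hM₂, hM₂Ω⟩ := Twalk (la := lam p c₁) (lb := lam p y₁)
        (List.mem_cons_self) hT hD₁ hmz
        (fun l hl => hD₁lab l (List.mem_cons_of_mem _ hl)) hc₁.lt L' hL'
        (fun l hl => Or.inl (List.mem_cons_of_mem _ hl))
      refine ⟨D₂ ++ M₂, hD₂.append hM₂, ?_⟩
      intro l hl
      rcases List.mem_append.1 hl with h | h
      · rcases hD₂lab l (List.mem_cons_of_mem _ h) with h2 | h2
        · exact Or.inl (by rw [h2]; exact List.mem_cons_self)
        · exact Or.inr h2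
      · exact hM₂Ω l h
termination_by (Icc p z).card
decreasing_by exact hcard

/-- Walking step used in `Rstar`. It produces a strictly larger reachable element. -/
theorem Rwalk (hSB : IsSBLabeling lam) {p z s : α} {L : List Λ}
    (hs : p ⋖ s) (hsz : ¬ s ≤ z) {la : Λ} (hla : la ∈ L)
    (hR : ∀ p' z' s' (L' : List Λ), (Icc p' (z' ⊔ s')).card < (Icc p (z ⊔ s)).card →
        SatPath lam p' z' L' → p' ⋖ s' →
        ∃ M, SatPath lam p' (z' ⊔ s') M ∧ ∀ l ∈ M, l ∈ L' ∨ l = lam p' s') :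
    ∀ {t m : α} {D : List Λ}, SatPath lam t m D → s ≤ m → m ≤ z ⊔ s →
      (∀ l ∈ D, l = la ∨ l = lam p s) → p < t → t ≤ z →
      ∀ K Pre : List Λ, SatPath lam t z K → (∀ l ∈ K, l ∈ L ∨ l = lam p s) →
      SatPath lam p t Pre → (∀ l ∈ Pre, l ∈ L ∨ l = lam p s) →
      ∃ z' M, z < z' ∧ z' ≤ z ⊔ s ∧ SatPath lam p z' M ∧ ∀ l ∈ M, l ∈ L ∨ l = lam p s := by
  intro t m D hD
  induction hD with
  | refl t =>
    intro hsm _ _ _ htz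
    exact absurd (hsm.trans htz) hsz
  | @cons x y m D' hxy hp ih =>
    intro hsm hmzs hDlab hpx hxz K Pre hK hKΩ hPre hPreΩ
    have hlab : lam x y = la ∨ lam x y = lam p s := hDlab _ (List.mem_cons_self)
    have hlabΩ : lam x y ∈ L ∨ lam x y = lam p s := by
      rcases hlab with h | h
      · exact Or.inl (h ▸ hla)
      · exact Or.inr h
    have hyzs : y ≤ z ⊔ s := (hp.le).trans hmzs
    by_cases hyz : y ≤ z
    · obtain ⟨M₁, hM₁, hM₁Ω⟩ := Tlem hSB x z y K hK hxy hyz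
      have hPre' : SatPath lam p y (Pre ++ [lam x y]) :=
        hPre.append (SatPath.cons hxy (SatPath.refl y))
      refine ih hsm hmzs (fun l hl => hDlab l (List.mem_cons_of_mem _ hl))
        (hpx.trans hxy.lt) hyz M₁ (Pre ++ [lam x y]) hM₁ ?_ hPre' ?_
      · intro l hl
        rcases hM₁Ω l hl with h | h
        · exact hKΩ l h
        · exact h ▸ hlabΩ
      · intro l hl
        rcases List.mem_append.1 hl with h | h
        · exact hPreΩ l h
        · simp only [List.mem_singleton] at h
          exact h ▸ hlabΩ
    · have hcard : (Icc x (z ⊔ y)).card < (Icc p (z ⊔ s)).card := by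
        refine card_lt_card (Icc_ssubset_Icc_left ?_ hpx (sup_le le_sup_left hyzs))
        exact le_sup_left.trans' (hpx.le.trans hxz)
      obtain ⟨M₁, hM₁, hM₁Ω⟩ := hR x z y K hcard hK hxy
      refine ⟨z ⊔ y, Pre ++ M₁, left_lt_sup.2 hyz, sup_le le_sup_left hyzs,
        hPre.append hM₁, ?_⟩
      intro l hl
      rcases List.mem_append.1 hl with h | h
      · exact hPreΩ l h
      · rcases hM₁Ω l h with h2 | h2
        · exact hKΩ l h2
        · exact h2 ▸ hlabΩ

/-- Joining a cover `s` of `p` to a path from `p` to `z`: there is a path from `p`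
to `z ⊔ s` using only old labels plus `lam p s`. -/
theorem Rstar (hSB : IsSBLabeling lam) (p z s : α) (L : List Λ)
    (hL : SatPath lam p z L) (hs : p ⋖ s) :
    ∃ M, SatPath lam p (z ⊔ s) M ∧ ∀ l ∈ M, l ∈ L ∨ l = lam p s := by
  by_cases hsz : s ≤ z
  · exact ⟨L, by rwa [sup_of_le_left hsz], fun l hl => Or.inl hl⟩
  cases hL with
  | refl =>
    refine ⟨[lam p s], ?_, by simp⟩
    have h : p ⊔ s = s := sup_of_le_right hs.le
    rw [h]
    exact SatPath.cons hs (SatPath.refl s)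
  | @cons _ c₁ _ L' hc₁ hL' =>
    have hce : c₁ ≠ s := fun h => hsz (h ▸ hL'.le)
    obtain ⟨D, hD⟩ := exists_satPath lam c₁ (c₁ ⊔ s) le_sup_left
    have hDlab := (sb_path hSB hc₁ hs hce (SatPath.cons hc₁ hD)).2.2
    have hR : ∀ p' z' s' (L'' : List Λ),
        (Icc p' (z' ⊔ s')).card < (Icc p (z ⊔ s)).card →
        SatPath lam p' z' L'' → p' ⋖ s' →
        ∃ M, SatPath lam p' (z' ⊔ s') M ∧ ∀ l ∈ M, l ∈ L'' ∨ l = lam p' s' :=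
      fun p' z' s' L'' hcard hL'' hs' => Rstar hSB p' z' s' L'' hL'' hs'
    obtain ⟨z', M, hzz', hz's, hM, hMΩ⟩ :=
      Rwalk hSB hs hsz ((List.mem_cons_self (a := lam p c₁) (l := L'))) hR hD le_sup_right
        (sup_le (hL'.le.trans le_sup_left) le_sup_right)
        (fun l hl => hDlab l (List.mem_cons_of_mem _ hl)) hc₁.lt hL'.le
        L' [lam p c₁] hL' (fun l hl => Or.inl (List.mem_cons_of_mem _ hl))
        (SatPath.cons hc₁ (SatPath.refl c₁))
        (fun l hl => by
          simp only [List.mem_singleton] at hl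
          exact Or.inl (hl ▸ List.mem_cons_self (a := lam p c₁) (l := L')))
    by_cases hsz' : s ≤ z'
    · have hz'eq : z' = z ⊔ s := le_antisymm hz's (sup_le hzz'.le hsz')
      exact ⟨M, hz'eq ▸ hM, hMΩ⟩
    · have hcard2 : (Icc p z).card < (Icc p z').card :=
        card_lt_card (Icc_ssubset_Icc_right hM.le le_rfl hzz')
      have hsup : z' ⊔ s = z ⊔ s :=
        le_antisymm (sup_le hz's le_sup_right) (sup_le (hzz'.le.trans le_sup_left) le_sup_right)
      have hcard3 : (Icc p (z' ⊔ s)).card = (Icc p (z ⊔ s)).card := by rw [hsup]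
      have hcard4 : (Icc p z').card ≤ (Icc p (z' ⊔ s)).card :=
        card_le_card (Icc_subset_Icc_right le_sup_left)
      obtain ⟨M₂, hM₂, hM₂Ω⟩ := Rstar hSB p z' s M hM hs
      refine ⟨M₂, hsup ▸ hM₂, fun l hl => ?_⟩
      rcases hM₂Ω l hl with h | h
      · exact hMΩ l h
      · exact Or.inr h
termination_by ((Icc p (z ⊔ s)).card, (Icc p (z ⊔ s)).card - (Icc p z).card)
decreasing_by
  · exact Prod.Lex.left _ _ hcard
  · rw [hcard3]
    exact Prod.Lex.right _ (by omega)

/-- Ascending lemma toward a contradiction, used in `Elem`. -/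
theorem Ascent (hSB : IsSBLabeling lam) {p c₁ b x : α}
    (hc₁ : p ⋖ c₁) (hb : p ⋖ b) (hne : c₁ ≠ b) (hmx : c₁ ⊔ b ≤ x)
    (hE : ∀ t y (K : List Λ), (Icc t x).card < (Icc p x).card → SatPath lam t x K →
          t ⋖ y → y ≤ x → lam t y ∈ K)
    (t : α) (hpt : p < t) (htm : t ≤ c₁ ⊔ b)
    (K Pre : List Λ) (hK : SatPath lam t x K) (hβK : lam p b ∉ K)
    (hPre : SatPath lam p t Pre) (hPreΛ : ∀ l ∈ Pre, l = lam p c₁) : False := by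
  by_cases htm' : t = c₁ ⊔ b
  · have h2 := (sb_path hSB hc₁ hb hne (htm' ▸ hPre)).2.1
    exact (hSB p c₁ b hc₁ hb hne).1 (hPreΛ _ h2).symm
  · have htlt : t < c₁ ⊔ b := lt_of_le_of_ne htm htm'
    obtain ⟨t', htt', ht'm⟩ := exists_covBy_le_of_lt htlt
    obtain ⟨G, hG⟩ := exists_satPath lam t' (c₁ ⊔ b) ht'm
    have hfull : SatPath lam p (c₁ ⊔ b) (Pre ++ lam t t' :: G) := by
      exact hPre.append (SatPath.cons htt' hG)
    have hγ : lam t t' = lam p c₁ ∨ lam t t' = lam p b :=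
      (sb_path hSB hc₁ hb hne hfull).2.2 _ (by simp)
    have hcard : (Icc t' (c₁ ⊔ b)).card < (Icc t (c₁ ⊔ b)).card :=
      card_lt_card (Icc_ssubset_Icc_left htm htt'.lt le_rfl)
    rcases hγ with hγ | hγ
    · obtain ⟨M₁, hM₁, hM₁Ω⟩ := Tlem hSB t x t' K hK htt' (ht'm.trans hmx)
      have hβM₁ : lam p b ∉ M₁ := by
        intro hmem
        rcases hM₁Ω _ hmem with h | h
        · exact hβK h
        · rw [hγ] at h
          exact (hSB p c₁ b hc₁ hb hne).1 h.symm
      exact Ascent hSB hc₁ hb hne hmx hE t' (hpt.trans htt'.lt) ht'm M₁ (Pre ++ [lam t t'])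
        hM₁ hβM₁ (hPre.append (SatPath.cons htt' (SatPath.refl t')))
        (by
          intro l hl
          rcases List.mem_append.1 hl with h | h
          · exact hPreΛ l h
          · simp only [List.mem_singleton] at h
            rw [h, hγ])
    · have hcardE : (Icc t x).card < (Icc p x).card := by
        refine card_lt_card (Icc_ssubset_Icc_left ?_ hpt le_rfl)
        exact (hpt.le.trans (htm.trans hmx))
      have := hE t t' K hcardE hK htt' (ht'm.trans hmx)
      rw [hγ] at this
      exact hβK this
termination_by (Icc t (c₁ ⊔ b)).card
decreasing_by exact hcard

/-- Every saturated path from `p` to `x` uses the label `lam p b` of every cover `b ≤ x`. -/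
theorem Elem (hSB : IsSBLabeling lam) (p x : α) (L : List Λ) (hL : SatPath lam p x L)
    (b : α) (hb : p ⋖ b) (hbx : b ≤ x) : lam p b ∈ L := by
  cases hL with
  | refl => exact absurd hbx hb.lt.not_ge
  | @cons _ c₁ _ L' hc₁ hL' =>
    by_cases hce : c₁ = b
    · subst hce; exact List.mem_cons_self
    by_contra hβ
    have hβ' : lam p b ∉ L' := fun h => hβ (List.mem_cons_of_mem _ h)
    have hmx : c₁ ⊔ b ≤ x := sup_le hL'.le hbx
    exact Ascent hSB hc₁ hb hce hmx
      (fun t y K hcard hK hty hyx => Elem hSB t x K hK y hty hyx)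
      c₁ hc₁.lt le_sup_left L' [lam p c₁] hL' hβ'
      (SatPath.cons hc₁ (SatPath.refl c₁)) (by simp)
termination_by (Icc p x).card
decreasing_by exact hcard

/-- Join of a finset of elements together with a base point `u`. -/
def joinF (u : α) (T : Finset α) : α := T.fold (· ⊔ ·) u id

theorem joinF_empty (u : α) : joinF u (∅ : Finset α) = u := rfl

theorem joinF_insert (u a : α) {T : Finset α} (h : a ∉ T) :
    joinF u (insert a T) = a ⊔ joinF u T := Finset.fold_insert h

theorem le_joinF (u : α) (T : Finset α) : u ≤ joinF u T := by
  induction T using Finset.induction_on with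
  | empty => exact le_rfl
  | @insert a T h ih => rw [joinF_insert u a h]; exact ih.trans le_sup_right

theorem mem_le_joinF (u : α) {a : α} {T : Finset α} (ha : a ∈ T) : a ≤ joinF u T := by
  induction T using Finset.induction_on with
  | empty => exact absurd ha (Finset.notMem_empty a)
  | @insert c T h ih =>
    rw [joinF_insert u c h]
    rcases Finset.mem_insert.1 ha with rfl | ha'
    · exact le_sup_left
    · exact (ih ha').trans le_sup_right

theorem joinF_le (u v : α) {T : Finset α} (hT : ∀ a ∈ T, a ≤ v) (huv : u ≤ v) :
    joinF u T ≤ v := by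
  induction T using Finset.induction_on with
  | empty => exact huv
  | @insert c T h ih =>
    rw [joinF_insert u c h]
    exact sup_le (hT c (Finset.mem_insert_self c T))
      (ih fun a ha => hT a (Finset.mem_insert_of_mem ha))

theorem exists_path_to_join (hSB : IsSBLabeling lam) (u : α) (T : Finset α)
    (hT : ∀ a ∈ T, u ⋖ a) :
    ∃ M, SatPath lam u (joinF u T) M ∧ ∀ l ∈ M, ∃ a ∈ T, l = lam u a := by
  induction T using Finset.induction_on with
  | empty => exact ⟨[], SatPath.refl u, by simp⟩
  | @insert c T h ih =>
    obtain ⟨M, hM, hMl⟩ := ih fun a ha => hT a (Finset.mem_insert_of_mem ha)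
    obtain ⟨M', hM', hM'l⟩ := Rstar hSB u (joinF u T) c M hM (hT c (Finset.mem_insert_self c T))
    rw [joinF_insert u c h]
    rw [sup_comm]
    refine ⟨M', hM', fun l hl => ?_⟩
    rcases hM'l l hl with h2 | h2
    · obtain ⟨a, ha, hla⟩ := hMl l h2
      exact ⟨a, Finset.mem_insert_of_mem ha, hla⟩
    · exact ⟨c, Finset.mem_insert_self c T, h2⟩

/-- Key structural consequence of an SB-labeling: a cover of `u` lying below a join of
covers of `u` must be one of them. -/
theorem claimD (hSB : IsSBLabeling lam) (u b : α) (T : Finset α) (hT : ∀ a ∈ T, u ⋖ a)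
    (hb : u ⋖ b) (hle : b ≤ joinF u T) : b ∈ T := by
  obtain ⟨M, hM, hMl⟩ := exists_path_to_join hSB u T hT
  have hmem := Elem hSB u (joinF u T) M hM b hb hle
  obtain ⟨a, ha, hab⟩ := hMl _ hmem
  by_contra hbT
  exact (hSB u b a hb (hT a ha) (fun h => hbT (h ▸ ha))).1 hab

attribute [local instance] Classical.propDecidable

/-- The covers of `u` lying below `v`. -/
noncomputable def atomsBelow (u v : α) : Finset α :=
  Finset.univ.filter fun a => u ⋖ a ∧ a ≤ v

/-- The crosscut sum. -/
noncomputable def Fcc (u v : α) : ℤ :=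
  ∑ T ∈ (atomsBelow u v).powerset.filter fun T => joinF u T = v, (-1 : ℤ) ^ T.card

theorem mem_atomsBelow {u v a : α} : a ∈ atomsBelow u v ↔ u ⋖ a ∧ a ≤ v := by
  rw [atomsBelow, Finset.mem_filter]
  exact ⟨fun h => h.2, fun h => ⟨Finset.mem_univ a, h⟩⟩

theorem atomsBelow_self (u : α) : atomsBelow u u = ∅ := by
  ext a
  simp only [mem_atomsBelow, Finset.notMem_empty, iff_false, not_and]
  exact fun h => h.lt.not_ge

theorem Fcc_self (u : α) : Fcc u u = 1 := by
  rw [Fcc, atomsBelow_self]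
  have hset : (∅ : Finset α).powerset.filter (fun T => joinF u T = u) = {∅} := by
    ext T
    simp only [Finset.mem_filter, Finset.mem_powerset, Finset.subset_empty,
      Finset.mem_singleton]
    constructor
    · exact fun h => h.1
    · rintro rfl
      exact ⟨rfl, joinF_empty u⟩
  rw [hset, Finset.sum_singleton]
  simp

theorem sum_Fcc (u v : α) (huv : u ≤ v) :
    ∑ x ∈ Icc u v, Fcc u x = if u = v then 1 else 0 := by
  have h1 : ∀ x ∈ Icc u v, Fcc u x =
      ∑ T ∈ (atomsBelow u v).powerset.filter fun T => joinF u T = x, (-1 : ℤ) ^ T.card := by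
    intro x hx
    rw [Fcc]
    congr 1
    ext T
    simp only [Finset.mem_filter, Finset.mem_powerset]
    constructor
    · rintro ⟨hsub, hjoin⟩
      refine ⟨fun a ha => ?_, hjoin⟩
      have := mem_atomsBelow.1 (hsub ha)
      exact mem_atomsBelow.2 ⟨this.1, this.2.trans (mem_Icc.1 hx).2⟩
    · rintro ⟨hsub, hjoin⟩
      refine ⟨fun a ha => ?_, hjoin⟩
      have := mem_atomsBelow.1 (hsub ha)
      exact mem_atomsBelow.2 ⟨this.1, hjoin ▸ mem_le_joinF u ha⟩
  have hmap : ∀ T ∈ (atomsBelow u v).powerset, joinF u T ∈ Icc u v := by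
    intro T hT
    rw [Finset.mem_powerset] at hT
    exact mem_Icc.2 ⟨le_joinF u T, joinF_le u v (fun a ha => (mem_atomsBelow.1 (hT ha)).2) huv⟩
  have h2 := Finset.sum_fiberwise_of_maps_to hmap (fun T => (-1 : ℤ) ^ T.card)
  rw [Finset.sum_congr rfl h1, h2, Finset.sum_powerset_neg_one_pow_card]
  congr 1
  simp only [eq_iff_iff]
  constructor
  · intro hA
    by_contra hne
    obtain ⟨q, hq, hqv⟩ := exists_covBy_le_of_lt (lt_of_le_of_ne huv hne)
    have hmem : q ∈ atomsBelow u v := mem_atomsBelow.2 ⟨hq, hqv⟩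
    rw [hA] at hmem
    exact Finset.notMem_empty q hmem
  · rintro rfl
    exact atomsBelow_self u

/-- Rota's crosscut theorem (atom version), for the interval `[u, v]`. -/
theorem mu_eq_Fcc (u v : α) (huv : u ≤ v) : IncidenceAlgebra.mu ℤ u v = Fcc u v := by
  by_cases h : u = v
  · subst h
    rw [Fcc_self, IncidenceAlgebra.mu_self]
  · have hsum_mu := IncidenceAlgebra.sum_Icc_mu_right (𝕜 := ℤ) u v
    have hsum_F := sum_Fcc u v huv
    rw [if_neg h] at hsum_mu hsum_F
    have hv : v ∈ Icc u v := mem_Icc.2 ⟨huv, le_rfl⟩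
    rw [← Finset.add_sum_erase _ _ hv] at hsum_mu hsum_F
    have hIH : ∀ x ∈ (Icc u v).erase v, IncidenceAlgebra.mu ℤ u x = Fcc u x := by
      intro x hx
      obtain ⟨hxv, hx'⟩ := Finset.mem_erase.1 hx
      have hxle := mem_Icc.1 hx'
      have hss : (Icc u x).card < (Icc u v).card := by
        refine card_lt_card ((Finset.ssubset_iff_of_subset (Icc_subset_Icc_right hxle.2)).2
          ⟨v, hv, fun hmem => hxv ?_⟩)
        exact le_antisymm hxle.2 (mem_Icc.1 hmem).2
      exact mu_eq_Fcc u x hxle.1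
    have heq : ∑ x ∈ (Icc u v).erase v, IncidenceAlgebra.mu ℤ u x
        = ∑ x ∈ (Icc u v).erase v, Fcc u x := Finset.sum_congr rfl hIH
    linarith
termination_by (Icc u v).card
decreasing_by exact hss

end Lattice

end SBProof

/-- In a finite lattice admitting an SB-labeling, the Möbius function takes values only in
`{-1, 0, 1}`. -/
theorem stmt9 [Lattice α] [Fintype α] [DecidableEq α] [LocallyFiniteOrder α]
    {Λ : Type*} (lam : α → α → Λ) (hSB : IsSBLabeling lam)
    (x y : α) (hxy : x ≤ y) :
    IncidenceAlgebra.mu ℤ x y ∈ ({-1, 0, 1} : Set ℤ) := by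
  classical
  rw [SBProof.mu_eq_Fcc x y hxy]
  have hsub : ((SBProof.atomsBelow x y).powerset.filter fun T => SBProof.joinF x T = y)
      ⊆ {SBProof.atomsBelow x y} := by
    intro T hT
    obtain ⟨hTsub, hTjoin⟩ := Finset.mem_filter.1 hT
    rw [Finset.mem_powerset] at hTsub
    rw [Finset.mem_singleton]
    refine Finset.Subset.antisymm hTsub ?_
    intro a ha
    obtain ⟨hcov, hle⟩ := SBProof.mem_atomsBelow.1 ha
    exact SBProof.claimD hSB x a T (fun c hc => (SBProof.mem_atomsBelow.1 (hTsub hc)).1)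
      hcov (hTjoin ▸ hle)
  rcases Finset.subset_singleton_iff.1 hsub with hempty | hsingle
  · rw [SBProof.Fcc, hempty, Finset.sum_empty]
    simp
  · rw [SBProof.Fcc, hsingle, Finset.sum_singleton]
    rcases Nat.even_or_odd (SBProof.atomsBelow x y).card with he | ho
    · rw [he.neg_one_pow]; simp
    · rw [ho.neg_one_pow]; simp
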